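/- Let F be a field and S_4(F) = { (a_{ij}) in T_4(F) : a_{11} = a_{22} and a_{33} = a_{44} }. Then S_4(F) is an i-reversible subring of T_4(F). -/

import Mathlib

/-- A ring is *i-reversible* if whenever `a * b` is a non-zero idempotent, `b * a` is an
idempotent. -/
def IsIReversible (S : Type*) [Ring S] : Prop :=
  ∀ a b : S, IsIdempotentElem (a * b) → a * b ≠ 0 → IsIdempotentElem (b * a)

/-- A ring is *reversible* if `a * b = 0` implies `b * a = 0`. -/
def IsReversible (S : Type*) [Ring S] : Prop :=
  ∀ a b : S, a * b = 0 → b * a = 0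

/-- A ring has only trivial idempotents if its only idempotents are `0` and `1`. -/
def HasOnlyTrivialIdempotents (S : Type*) [Ring S] : Prop :=
  ∀ e : S, IsIdempotentElem e → e = 0 ∨ e = 1

/-- Upper triangular predicate for square matrices. -/
def Matrix.IsUpperTri {n : ℕ} {R : Type*} [Zero R] (A : Matrix (Fin n) (Fin n) R) : Prop :=
  ∀ ⦃i j : Fin n⦄, j < i → A i j = 0

lemma Matrix.IsUpperTri.mul {n : ℕ} {R : Type*} [Ring R]
    {A B : Matrix (Fin n) (Fin n) R} (hA : A.IsUpperTri) (hB : B.IsUpperTri) :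
    (A * B).IsUpperTri := by
  intro i j h
  rw [Matrix.mul_apply]
  refine Finset.sum_eq_zero fun k _ => ?_
  rcases lt_or_ge k i with hk | hk
  · rw [hA hk, zero_mul]
  · rw [hB (lt_of_lt_of_le h hk), mul_zero]

/-- The ring `T_n(R)` of upper triangular `n × n` matrices, as a subring of the matrix ring. -/
def triangularRing (n : ℕ) (R : Type*) [Ring R] :
    Subring (Matrix (Fin n) (Fin n) R) where
  carrier := {A | A.IsUpperTri}
  mul_mem' ha hb := ha.mul hb
  one_mem' := fun i j h => by simp [Matrix.one_apply, (ne_of_lt h).symm]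
  add_mem' ha hb := fun i j h => by simp [Matrix.add_apply, ha h, hb h]
  zero_mem' := fun i j h => rfl
  neg_mem' ha := fun i j h => by simp [ha h]

lemma diag_mul_upperTri {n : ℕ} {R : Type*} [Ring R]
    {A B : Matrix (Fin n) (Fin n) R} (hA : A.IsUpperTri)
    (hB : B.IsUpperTri) (i : Fin n) : (A * B) i i = A i i * B i i := by
  rw [Matrix.mul_apply]
  refine Finset.sum_eq_single i (fun k _ hk => ?_) (by simp)
  rcases lt_or_gt_of_ne hk with h | h
  · rw [hA h, zero_mul]
  · rw [hB h, mul_zero]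

/-- The ring `D_n(R)` of upper triangular `n × n` matrices with constant diagonal. -/
def constDiagRing (n : ℕ) (R : Type*) [Ring R] :
    Subring (Matrix (Fin n) (Fin n) R) where
  carrier := {A | A.IsUpperTri ∧ ∀ i j : Fin n, A i i = A j j}
  mul_mem' := by
    rintro A B ⟨hA, hA'⟩ ⟨hB, hB'⟩
    refine ⟨hA.mul hB, fun i j => ?_⟩
    rw [diag_mul_upperTri hA hB, diag_mul_upperTri hA hB, hA' i j, hB' i j]
  one_mem' := ⟨fun i j h => by simp [Matrix.one_apply, (ne_of_lt h).symm], by simp⟩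
  add_mem' := by
    rintro A B ⟨hA, hA'⟩ ⟨hB, hB'⟩
    exact ⟨fun i j h => by simp [Matrix.add_apply, hA h, hB h],
      fun i j => by simp [Matrix.add_apply, hA' i j, hB' i j]⟩
  zero_mem' := ⟨fun i j h => rfl, by simp⟩
  neg_mem' := by
    rintro A ⟨hA, hA'⟩
    exact ⟨fun i j h => by simp [hA h], fun i j => by simp [hA' i j]⟩

/-- The ring `S_4(F)` of upper triangular `4 × 4` matrices with `a_{11} = a_{22}` and
`a_{33} = a_{44}`. -/
def S4Ring (F : Type*) [Ring F] : Subring (Matrix (Fin 4) (Fin 4) F) where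
  carrier := {A | A.IsUpperTri ∧ A 0 0 = A 1 1 ∧ A 2 2 = A 3 3}
  mul_mem' := by
    rintro A B ⟨hA, hA1, hA2⟩ ⟨hB, hB1, hB2⟩
    refine ⟨hA.mul hB, ?_, ?_⟩
    · rw [diag_mul_upperTri hA hB, diag_mul_upperTri hA hB, hA1, hB1]
    · rw [diag_mul_upperTri hA hB, diag_mul_upperTri hA hB, hA2, hB2]
  one_mem' := ⟨fun i j h => by simp [Matrix.one_apply, (ne_of_lt h).symm], by simp, by simp⟩
  add_mem' := by
    rintro A B ⟨hA, hA1, hA2⟩ ⟨hB, hB1, hB2⟩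
    exact ⟨fun i j h => by simp [Matrix.add_apply, hA h, hB h],
      by simp [Matrix.add_apply, hA1, hB1], by simp [Matrix.add_apply, hA2, hB2]⟩
  zero_mem' := ⟨fun i j h => rfl, rfl, rfl⟩
  neg_mem' := by
    rintro A ⟨hA, hA1, hA2⟩
    exact ⟨fun i j h => by simp [hA h], by simp [hA1], by simp [hA2]⟩

section Aux

variable {F : Type*} [Field F]

lemma eq_zero_or_one_of_sq {d : F} (h : d * d = d) : d = 0 ∨ d = 1 := by
  rcases mul_eq_zero.mp (show d * (d - 1) = 0 by linear_combination h) with h' | h'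
  · exact Or.inl h'
  · exact Or.inr (by linear_combination h')

/-- Structure of upper-triangular idempotents in `S_4(F)`. -/
lemma idem_structure (M : Matrix (Fin 4) (Fin 4) F) (hM : M.IsUpperTri)
    (h11 : M 1 1 = M 0 0) (h33 : M 3 3 = M 2 2) (hid : M * M = M) :
    (M 0 0 = 0 ∨ M 0 0 = 1) ∧ (M 2 2 = 0 ∨ M 2 2 = 1) ∧ M 0 1 = 0 ∧ M 2 3 = 0 ∧
      (M 0 0 = 0 → M 2 2 = 0 → M = 0) ∧ (M 0 0 = 1 → M 2 2 = 1 → M = 1) := by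
  have z10 : M 1 0 = 0 := hM (by decide)
  have z20 : M 2 0 = 0 := hM (by decide)
  have z30 : M 3 0 = 0 := hM (by decide)
  have z21 : M 2 1 = 0 := hM (by decide)
  have z31 : M 3 1 = 0 := hM (by decide)
  have z32 : M 3 2 = 0 := hM (by decide)
  have e00 := congrFun (congrFun hid 0) 0
  have e22 := congrFun (congrFun hid 2) 2
  have e01 := congrFun (congrFun hid 0) 1
  have e23 := congrFun (congrFun hid 2) 3
  have e12 := congrFun (congrFun hid 1) 2
  have e02 := congrFun (congrFun hid 0) 2
  have e13 := congrFun (congrFun hid 1) 3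
  have e03 := congrFun (congrFun hid 0) 3
  simp only [Matrix.mul_apply, Fin.sum_univ_four, z10, z20, z30, z21, z31, z32,
    h11, h33, zero_mul, mul_zero, add_zero, zero_add] at e00 e22 e01 e23 e12 e02 e13 e03
  have h0 : M 0 0 = 0 ∨ M 0 0 = 1 := eq_zero_or_one_of_sq e00
  have h2 : M 2 2 = 0 ∨ M 2 2 = 1 := eq_zero_or_one_of_sq e22
  have h01 : M 0 1 = 0 := by
    rcases h0 with h | h <;> rw [h] at e01 <;>
      first | linear_combination e01 | linear_combination -e01
  have h23 : M 2 3 = 0 := by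
    rcases h2 with h | h <;> rw [h] at e23 <;>
      first | linear_combination e23 | linear_combination -e23
  refine ⟨h0, h2, h01, h23, ?_, ?_⟩
  · intro hd he
    rw [hd, he] at e12 e02 e13 e03
    have h12 : M 1 2 = 0 := by linear_combination -e12
    have h02 : M 0 2 = 0 := by linear_combination -e02 + M 1 2 * h01
    have h13 : M 1 3 = 0 := by linear_combination -e13 + M 1 2 * h23
    have h03 : M 0 3 = 0 := by
      linear_combination -e03 + M 1 3 * h01 + M 0 2 * h23
    ext i j
    fin_cases i <;> fin_cases j <;> simp_all
  · intro hd he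
    rw [hd, he] at e12 e02 e13 e03
    have h12 : M 1 2 = 0 := by linear_combination e12
    have h02 : M 0 2 = 0 := by linear_combination e02 - M 1 2 * h01
    have h13 : M 1 3 = 0 := by linear_combination e13 - M 1 2 * h23
    have h03 : M 0 3 = 0 := by
      linear_combination e03 - M 1 3 * h01 - M 0 2 * h23
    ext i j
    fin_cases i <;> fin_cases j <;> simp_all [Matrix.one_apply]

/-- An upper-triangular matrix with diagonal `(1,1,0,0)` and vanishing `(0,1)` and `(2,3)`
entries is idempotent. -/
lemma idem_of_diag_1100 (N : Matrix (Fin 4) (Fin 4) F) (hN : N.IsUpperTri)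
    (h00 : N 0 0 = 1) (h11 : N 1 1 = 1) (h22 : N 2 2 = 0) (h33 : N 3 3 = 0)
    (h01 : N 0 1 = 0) (h23 : N 2 3 = 0) : N * N = N := by
  have z10 : N 1 0 = 0 := hN (by decide)
  have z20 : N 2 0 = 0 := hN (by decide)
  have z30 : N 3 0 = 0 := hN (by decide)
  have z21 : N 2 1 = 0 := hN (by decide)
  have z31 : N 3 1 = 0 := hN (by decide)
  have z32 : N 3 2 = 0 := hN (by decide)
  ext i j
  fin_cases i <;> fin_cases j <;>
    simp [Matrix.mul_apply, Fin.sum_univ_four, z10, z20, z30, z21, z31, z32,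
      h00, h11, h22, h33, h01, h23]

/-- An upper-triangular matrix with diagonal `(0,0,1,1)` and vanishing `(0,1)` and `(2,3)`
entries is idempotent. -/
lemma idem_of_diag_0011 (N : Matrix (Fin 4) (Fin 4) F) (hN : N.IsUpperTri)
    (h00 : N 0 0 = 0) (h11 : N 1 1 = 0) (h22 : N 2 2 = 1) (h33 : N 3 3 = 1)
    (h01 : N 0 1 = 0) (h23 : N 2 3 = 0) : N * N = N := by
  have z10 : N 1 0 = 0 := hN (by decide)
  have z20 : N 2 0 = 0 := hN (by decide)
  have z30 : N 3 0 = 0 := hN (by decide)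
  have z21 : N 2 1 = 0 := hN (by decide)
  have z31 : N 3 1 = 0 := hN (by decide)
  have z32 : N 3 2 = 0 := hN (by decide)
  ext i j
  fin_cases i <;> fin_cases j <;>
    simp [Matrix.mul_apply, Fin.sum_univ_four, z10, z20, z30, z21, z31, z32,
      h00, h11, h22, h33, h01, h23]

end Aux

/-- For a field `F`, `S_4(F)` is an i-reversible subring of `T_4(F)`. -/
theorem S4Ring_isIReversible (F : Type*) [Field F] :
    IsIReversible (S4Ring F) ∧ S4Ring F ≤ triangularRing 4 F := by
  constructor
  · rintro ⟨A, hAt, hA1, hA2⟩ ⟨B, hBt, hB1, hB2⟩ hidem hne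
    have hE : (A * B) * (A * B) = A * B := congrArg Subtype.val hidem
    have hne' : A * B ≠ 0 := fun h => hne (Subtype.ext h)
    refine Subtype.ext ?_
    show (B * A) * (B * A) = B * A
    have hEt : (A * B).IsUpperTri := hAt.mul hBt
    have h11E : (A * B) 1 1 = (A * B) 0 0 := by
      rw [diag_mul_upperTri hAt hBt, diag_mul_upperTri hAt hBt, ← hA1, ← hB1]
    have h33E : (A * B) 3 3 = (A * B) 2 2 := by
      rw [diag_mul_upperTri hAt hBt, diag_mul_upperTri hAt hBt, ← hA2, ← hB2]
    obtain ⟨h0, h2, h01, h23, hzero, hone⟩ := idem_structure (A * B) hEt h11E h33E hE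
    have zA20 : A 2 0 = 0 := hAt (by decide)
    have zA21 : A 2 1 = 0 := hAt (by decide)
    have zA31 : A 3 1 = 0 := hAt (by decide)
    have zB20 : B 2 0 = 0 := hBt (by decide)
    have zB21 : B 2 1 = 0 := hBt (by decide)
    have zB31 : B 3 1 = 0 := hBt (by decide)
    have hE01 : A 0 0 * B 0 1 + A 0 1 * B 1 1 = 0 := by
      have h := h01
      rw [Matrix.mul_apply, Fin.sum_univ_four, zB21, zB31] at h
      linear_combination h
    have hE23 : A 2 2 * B 2 3 + A 2 3 * B 3 3 = 0 := by
      have h := h23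
      rw [Matrix.mul_apply, Fin.sum_univ_four, zA20, zA21] at h
      linear_combination h
    have hN01 : (B * A) 0 1 = 0 := by
      rw [Matrix.mul_apply, Fin.sum_univ_four, zA21, zA31]
      linear_combination hE01 + A 0 1 * hB1 - B 0 1 * hA1
    have hN23 : (B * A) 2 3 = 0 := by
      rw [Matrix.mul_apply, Fin.sum_univ_four, zB20, zB21]
      linear_combination hE23 + A 2 3 * hB2 - B 2 3 * hA2
    have hd' : (A * B) 0 0 = A 0 0 * B 0 0 := diag_mul_upperTri hAt hBt 0
    have he' : (A * B) 2 2 = A 2 2 * B 2 2 := diag_mul_upperTri hAt hBt 2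
    rcases h0 with hd | hd <;> rcases h2 with he | he
    · exact absurd (hzero hd he) hne'
    · -- d = 0, e = 1
      refine idem_of_diag_0011 (B * A) (hBt.mul hAt) ?_ ?_ ?_ ?_ hN01 hN23
      · rw [diag_mul_upperTri hBt hAt, mul_comm, ← hd']; exact hd
      · rw [diag_mul_upperTri hBt hAt, ← hA1, ← hB1, mul_comm, ← hd']; exact hd
      · rw [diag_mul_upperTri hBt hAt, mul_comm, ← he']; exact he
      · rw [diag_mul_upperTri hBt hAt, ← hA2, ← hB2, mul_comm, ← he']; exact he
    · -- d = 1, e = 0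
      refine idem_of_diag_1100 (B * A) (hBt.mul hAt) ?_ ?_ ?_ ?_ hN01 hN23
      · rw [diag_mul_upperTri hBt hAt, mul_comm, ← hd']; exact hd
      · rw [diag_mul_upperTri hBt hAt, ← hA1, ← hB1, mul_comm, ← hd']; exact hd
      · rw [diag_mul_upperTri hBt hAt, mul_comm, ← he']; exact he
      · rw [diag_mul_upperTri hBt hAt, ← hA2, ← hB2, mul_comm, ← he']; exact he
    · -- d = 1, e = 1 : A * B = 1, hence B * A = 1
      have h1 : B * A = 1 := mul_eq_one_comm.mp (hone hd he)
      rw [h1, one_mul]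
  · rintro A ⟨h, -, -⟩
    exact h
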